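/- Let (X_n)_{n∈ℕ} be a sequence of invertible 3×3 matrices and (ε_n) a sequence of positive reals with ε_n → 0. Suppose each X_n has the form [[a_n, 0, 0],[b_n, a_n f(ε_n)⁻¹, a_n f(ε_n)⁻¹],[c_n, 0, a_n ε_n f(ε_n)⁻¹]] with a_n ≠ 0, where f(t) = √(1 + t²/2 + √(1 + t⁴/4)). Then ‖X_n‖·‖X_n⁻¹‖ ≥ ε_n^{−1/3}·f(ε_n)^{2/3}, and in particular sup_n ‖X_n‖·‖X_n⁻¹‖ = ∞. -/

import Mathlib

open Matrix Filter

/-- `f(t) = √(1 + t²/2 + √(1 + t⁴/4))`. -/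
noncomputable def fDA (t : ℝ) : ℝ :=
  Real.sqrt (1 + t ^ 2 / 2 + Real.sqrt (1 + t ^ 4 / 4))

lemma entry_norm_le_clm {n : Type*} [Fintype n] [DecidableEq n] (M : Matrix n n ℂ) (i j : n) :
    ‖M i j‖ ≤ ‖Matrix.toEuclideanCLM (𝕜 := ℂ) M‖ := by
  classical
  set T := Matrix.toEuclideanCLM (𝕜 := ℂ) M with hT
  set x : EuclideanSpace ℂ n := EuclideanSpace.single j 1 with hx
  have hxn : ‖x‖ = 1 := by simp [hx]
  have happ : T x = (WithLp.equiv 2 _).symm (M *ᵥ Pi.single j 1) := by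
    rw [hT, hx, EuclideanSpace.single]
    exact Matrix.toEuclideanCLM_toLp M _
  have happ2 : T x i = M i j := by
    rw [happ, WithLp.equiv_symm_apply, PiLp.toLp_apply, Matrix.mulVec_single]; simp
  have h2 : ‖M i j‖ ≤ ‖T x‖ := by
    rw [← happ2, EuclideanSpace.norm_eq]
    have h3 : ‖T x i‖ ^ 2 ≤ ∑ k, ‖T x k‖ ^ 2 :=
      Finset.single_le_sum (f := fun k => ‖T x k‖ ^ 2)
        (fun k _ => sq_nonneg _) (Finset.mem_univ i)
    calc ‖T x i‖ = Real.sqrt (‖T x i‖ ^ 2) := by rw [Real.sqrt_sq (norm_nonneg _)]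
      _ ≤ _ := Real.sqrt_le_sqrt h3
  calc ‖M i j‖ ≤ ‖T x‖ := h2
    _ ≤ ‖T‖ * ‖x‖ := T.le_opNorm x
    _ = ‖T‖ := by rw [hxn, mul_one]

lemma one_le_fDA (t : ℝ) : 1 ≤ fDA t := by
  unfold fDA
  have h0 : (0:ℝ) ≤ Real.sqrt (1 + t ^ 4 / 4) := Real.sqrt_nonneg _
  have h2 : (1:ℝ) ≤ 1 + t ^ 2 / 2 + Real.sqrt (1 + t ^ 4 / 4) := by nlinarith [sq_nonneg t]
  calc (1:ℝ) = Real.sqrt 1 := Real.sqrt_one.symm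
    _ ≤ _ := Real.sqrt_le_sqrt h2

set_option maxHeartbeats 1000000 in
lemma inv_formula (t F : ℝ) (ht : t ≠ 0) (hF : F ≠ 0) (a b c : ℂ) (ha : a ≠ 0) :
    (!![a, 0, 0;
       b, a * (F:ℂ)⁻¹, a * (F:ℂ)⁻¹;
       c, 0, a * (t:ℂ) * (F:ℂ)⁻¹])⁻¹ =
    !![a⁻¹, 0, 0;
       (F:ℂ) * (c * (t:ℂ)⁻¹ - b) * a⁻¹ * a⁻¹, (F:ℂ) * a⁻¹, -((F:ℂ) * a⁻¹ * (t:ℂ)⁻¹);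
       -(c * (F:ℂ) * a⁻¹ * a⁻¹ * (t:ℂ)⁻¹), 0, (F:ℂ) * a⁻¹ * (t:ℂ)⁻¹] := by
  have htC : (t:ℂ) ≠ 0 := Complex.ofReal_ne_zero.mpr ht
  have hFC : (F:ℂ) ≠ 0 := Complex.ofReal_ne_zero.mpr hF
  apply Matrix.inv_eq_right_inv
  ext i j
  fin_cases i <;> fin_cases j <;>
    simp [Matrix.mul_apply, Fin.sum_univ_three, Matrix.one_apply] <;>
    first
      | ring1
      | (field_simp; ring1)
      | (field_simp; rw [add_neg_eq_zero, div_eq_iff (by simp [mul_ne_zero_iff, ha, htC, hFC])];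
          ring1)
      | field_simp

/-- for invertible matrices `Xₙ` of the given triangular form with `εₙ → 0`,
the condition numbers satisfy `‖Xₙ‖·‖Xₙ⁻¹‖ ≥ εₙ^{-1/3} f(εₙ)^{2/3}` and are unbounded. -/
theorem stmt11 (X : ℕ → Matrix (Fin 3) (Fin 3) ℂ) (ε : ℕ → ℝ)
    (hε : ∀ n, 0 < ε n) (hlim : Tendsto ε atTop (nhds 0))
    (hinv : ∀ n, IsUnit (X n))
    (a b c : ℕ → ℂ) (ha : ∀ n, a n ≠ 0)
    (hform : ∀ n, X n =
      !![a n, 0, 0;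
         b n, a n * ((fDA (ε n) : ℂ))⁻¹, a n * ((fDA (ε n) : ℂ))⁻¹;
         c n, 0, a n * (ε n : ℂ) * ((fDA (ε n) : ℂ))⁻¹]) :
    (∀ n, (ε n) ^ (-(1 : ℝ) / 3) * (fDA (ε n)) ^ ((2 : ℝ) / 3) ≤
        ‖Matrix.toEuclideanCLM (𝕜 := ℂ) (X n)‖ *
          ‖Matrix.toEuclideanCLM (𝕜 := ℂ) (X n)⁻¹‖) ∧
    ∀ C : ℝ, ∃ n, C < ‖Matrix.toEuclideanCLM (𝕜 := ℂ) (X n)‖ *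
        ‖Matrix.toEuclideanCLM (𝕜 := ℂ) (X n)⁻¹‖ := by
  have main : ∀ n, (ε n) ^ (-(1 : ℝ) / 3) * (fDA (ε n)) ^ ((2 : ℝ) / 3) ≤
      ‖Matrix.toEuclideanCLM (𝕜 := ℂ) (X n)‖ *
        ‖Matrix.toEuclideanCLM (𝕜 := ℂ) (X n)⁻¹‖ := by
    intro n
    have ht : 0 < ε n := hε n
    have hF1 : 1 ≤ fDA (ε n) := one_le_fDA (ε n)
    have hFpos : 0 < fDA (ε n) := lt_of_lt_of_le one_pos hF1
    have haC := ha n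
    have hXinv : (X n)⁻¹ =
        !![(a n)⁻¹, 0, 0;
           (fDA (ε n) : ℂ) * (c n * ((ε n : ℝ) : ℂ)⁻¹ - b n) * (a n)⁻¹ * (a n)⁻¹,
             (fDA (ε n) : ℂ) * (a n)⁻¹, -((fDA (ε n) : ℂ) * (a n)⁻¹ * ((ε n : ℝ) : ℂ)⁻¹);
           -(c n * (fDA (ε n) : ℂ) * (a n)⁻¹ * (a n)⁻¹ * ((ε n : ℝ) : ℂ)⁻¹), 0,
             (fDA (ε n) : ℂ) * (a n)⁻¹ * ((ε n : ℝ) : ℂ)⁻¹] := by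
      rw [hform n]
      exact inv_formula (ε n) (fDA (ε n)) (ne_of_gt ht) (ne_of_gt hFpos) (a n) (b n) (c n) haC
    set NX := ‖Matrix.toEuclideanCLM (𝕜 := ℂ) (X n)‖ with hNXdef
    set NY := ‖Matrix.toEuclideanCLM (𝕜 := ℂ) (X n)⁻¹‖ with hNYdef
    have hApos : 0 < ‖a n‖ := norm_pos_iff.mpr haC
    have hXa : ‖a n‖ ≤ NX := by
      have h := entry_norm_le_clm (X n) 0 0
      have he : (X n) 0 0 = a n := by rw [hform n]; simp
      rwa [he] at h
    have hY11 : fDA (ε n) * ‖a n‖⁻¹ ≤ NY := by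
      have h := entry_norm_le_clm ((X n)⁻¹) 1 1
      have he : ((X n)⁻¹) 1 1 = (fDA (ε n) : ℂ) * (a n)⁻¹ := by rw [hXinv]; simp
      rw [he] at h
      simpa [norm_mul, Complex.norm_real, abs_of_pos hFpos] using h
    have hY12 : fDA (ε n) * ‖a n‖⁻¹ * (ε n)⁻¹ ≤ NY := by
      have h := entry_norm_le_clm ((X n)⁻¹) 1 2
      have he : ((X n)⁻¹) 1 2 = -((fDA (ε n) : ℂ) * (a n)⁻¹ * ((ε n : ℝ) : ℂ)⁻¹) := by
        rw [hXinv]; simp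
      rw [he] at h
      simpa [norm_mul, Complex.norm_real, abs_of_pos hFpos, abs_of_pos ht, mul_assoc] using h
    have hNXnn : 0 ≤ NX := norm_nonneg _
    have hNYnn : 0 ≤ NY := norm_nonneg _
    have hFle : fDA (ε n) ^ ((2:ℝ)/3) ≤ fDA (ε n) := by
      have h := Real.rpow_le_rpow_of_exponent_le hF1 (show (2:ℝ)/3 ≤ 1 by norm_num)
      rwa [Real.rpow_one] at h
    rcases le_or_gt (ε n) 1 with ht1 | ht1
    · have hb : fDA (ε n) * (ε n)⁻¹ ≤ NX * NY := by
        have h1 : ‖a n‖ * (fDA (ε n) * ‖a n‖⁻¹ * (ε n)⁻¹) ≤ NX * NY :=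
          mul_le_mul hXa hY12 (by positivity) hNXnn
        calc fDA (ε n) * (ε n)⁻¹ = ‖a n‖ * (fDA (ε n) * ‖a n‖⁻¹ * (ε n)⁻¹) := by
              rw [show ‖a n‖ * (fDA (ε n) * ‖a n‖⁻¹ * (ε n)⁻¹)
                  = (‖a n‖ * ‖a n‖⁻¹) * (fDA (ε n) * (ε n)⁻¹) by ring,
                mul_inv_cancel₀ (ne_of_gt hApos), one_mul]
          _ ≤ NX * NY := h1
      have hrp : (ε n) ^ (-(1:ℝ)/3) ≤ (ε n)⁻¹ := by
        have h := Real.rpow_le_rpow_of_exponent_ge ht ht1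
          (show (-1:ℝ) ≤ -(1:ℝ)/3 by norm_num)
        rwa [Real.rpow_neg_one] at h
      calc (ε n) ^ (-(1:ℝ)/3) * fDA (ε n) ^ ((2:ℝ)/3)
          ≤ (ε n)⁻¹ * fDA (ε n) := mul_le_mul hrp hFle (by positivity) (by positivity)
        _ = fDA (ε n) * (ε n)⁻¹ := by ring
        _ ≤ NX * NY := hb
    · have hb : fDA (ε n) ≤ NX * NY := by
        have h1 : ‖a n‖ * (fDA (ε n) * ‖a n‖⁻¹) ≤ NX * NY :=
          mul_le_mul hXa hY11 (by positivity) hNXnn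
        calc fDA (ε n) = ‖a n‖ * (fDA (ε n) * ‖a n‖⁻¹) := by
              rw [show ‖a n‖ * (fDA (ε n) * ‖a n‖⁻¹)
                  = (‖a n‖ * ‖a n‖⁻¹) * fDA (ε n) by ring,
                mul_inv_cancel₀ (ne_of_gt hApos), one_mul]
          _ ≤ NX * NY := h1
      have hrp : (ε n) ^ (-(1:ℝ)/3) ≤ 1 :=
        Real.rpow_le_one_of_one_le_of_nonpos ht1.le (by norm_num)
      calc (ε n) ^ (-(1:ℝ)/3) * fDA (ε n) ^ ((2:ℝ)/3)
          ≤ 1 * fDA (ε n) := mul_le_mul hrp hFle (by positivity) zero_le_one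
        _ = fDA (ε n) := one_mul _
        _ ≤ NX * NY := hb
  refine ⟨main, fun C => ?_⟩
  set D := max C 1 with hD
  have hD1 : (1:ℝ) ≤ D := le_max_right _ _
  have hDpos : 0 < D := lt_of_lt_of_le one_pos hD1
  have hδpos : 0 < (D⁻¹) ^ (3:ℕ) := by positivity
  obtain ⟨n, hn⟩ := (hlim.eventually (Iio_mem_nhds hδpos)).exists
  have ht : 0 < ε n := hε n
  refine ⟨n, ?_⟩
  have h13 : (ε n) ^ ((1:ℝ)/3) < D⁻¹ := by
    have h1 : (ε n) ^ ((1:ℝ)/3) < ((D⁻¹) ^ (3:ℕ)) ^ ((1:ℝ)/3) :=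
      Real.rpow_lt_rpow ht.le hn (by norm_num)
    have h2 : ((D⁻¹ : ℝ) ^ (3:ℕ)) ^ ((1:ℝ)/3) = D⁻¹ := by
      rw [← Real.rpow_natCast (D⁻¹) 3, ← Real.rpow_mul (by positivity)]
      norm_num
    rwa [h2] at h1
  have hDlt : D < (ε n) ^ (-(1:ℝ)/3) := by
    have hpos : 0 < (ε n) ^ ((1:ℝ)/3) := Real.rpow_pos_of_pos ht _
    have h := inv_strictAnti₀ hpos h13
    rw [inv_inv] at h
    rw [show (-(1:ℝ)/3) = -((1:ℝ)/3) by norm_num, Real.rpow_neg ht.le]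
    exact h
  have hF2 : (1:ℝ) ≤ (fDA (ε n)) ^ ((2:ℝ)/3) := by
    have h := Real.rpow_le_rpow (by norm_num) (one_le_fDA (ε n)) (show (0:ℝ) ≤ 2/3 by norm_num)
    rwa [Real.one_rpow] at h
  calc C ≤ D := le_max_left _ _
    _ < (ε n) ^ (-(1:ℝ)/3) := hDlt
    _ ≤ (ε n) ^ (-(1:ℝ)/3) * (fDA (ε n)) ^ ((2:ℝ)/3) :=
        le_mul_of_one_le_right (by positivity) hF2
    _ ≤ _ := main n
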